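/- On an infinitesimally Kobayashi non-degenerate complex manifold M, every semi-Bloch function is normal: 𝓑(M) ⊂ 𝓢𝓑(M) ⊂ 𝓝(M). -/

import Mathlib

open Metric Set Filter

noncomputable section

/-- The unit disk in ℂ. -/
def unitDisk : Set ℂ := Metric.ball 0 1

variable {E : Type*} [NormedAddCommGroup E] [NormedSpace ℂ E]

/-- An analytic disk in `M`: a holomorphic map from the unit disk into `M`. -/
def AnalyticDiskIn (M : Set E) (φ : ℂ → E) : Prop :=
  DifferentiableOn ℂ φ unitDisk ∧ Set.MapsTo φ unitDisk M

/-- The infinitesimal Kobayashi–Royden pseudometric. -/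
def kobayashi (M : Set E) (z ξ : E) : ℝ :=
  sInf { r : ℝ | ∃ (φ : ℂ → E) (a : ℂ), AnalyticDiskIn M φ ∧ φ 0 = z ∧
    deriv φ 0 = a • ξ ∧ a ≠ 0 ∧ r = 1 / ‖a‖ }

/-- The infinitesimal spherical metric `χ(w, ξ) = 2|ξ|/(1+|w|²)`. -/
def sphMetric (w ξ : ℂ) : ℝ := 2 * ‖ξ‖ / (1 + ‖w‖ ^ 2)

/-- `g` is a normal function on `M`. -/
def NormalOn (M : Set E) (g : E → ℂ) : Prop :=
  ∃ C : ℝ, ∀ z ∈ M, ∀ ξ : E, sphMetric (g z) (fderiv ℂ g z ξ) ≤ C * kobayashi M z ξ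

/-- `f` is a Bloch function on `M`. -/
def BlochOn (M : Set E) (f : E → ℂ) : Prop :=
  ∃ C : ℝ, ∀ z ∈ M, ∀ ξ : E, ‖fderiv ℂ f z ξ‖ ≤ C * kobayashi M z ξ

/-- `f` is semi-Bloch on `M`: `exp (λ f)` is normal for every `λ ∈ ℂ`. -/
def SemiBloch (M : Set E) (f : E → ℂ) : Prop :=
  ∀ lam : ℂ, NormalOn M (fun z => Complex.exp (lam * f z))

/-- `M` is infinitesimally Kobayashi non-degenerate. -/
def KobayashiNondegenerate (M : Set E) : Prop :=
  ∀ z ∈ M, ∀ ξ : E, ξ ≠ 0 → 0 < kobayashi M z ξ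

/-- `D(w₀, r)` is a schlicht disk in the range of `f`. -/
def SchlichtRadius (M : Set E) (f : E → ℂ) (w₀ : ℂ) (r : ℝ) : Prop :=
  ∃ h : ℂ → E, DifferentiableOn ℂ h unitDisk ∧ Set.MapsTo h unitDisk M ∧
    DifferentiableOn ℂ (f ∘ h) unitDisk ∧ Set.BijOn (f ∘ h) unitDisk (Metric.ball w₀ r)

/-- A (real-affine) line in the complex plane. -/
def IsLine (L : Set ℂ) : Prop :=
  ∃ a b : ℂ, b ≠ 0 ∧ L = {z : ℂ | ∃ t : ℝ, z = a + t * b}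

/-- The chordal (spherical) distance on ℂ ⊂ ℂ̂. -/
def chordal (w z : ℂ) : ℝ :=
  2 * dist w z / (Real.sqrt (1 + ‖w‖ ^ 2) * Real.sqrt (1 + ‖z‖ ^ 2))

/-- A sequence of functions on the unit disk is a normal family with respect to the
spherical metric: every subsequence has a further subsequence converging locally
uniformly on the disk, either spherically to a function or uniformly to `∞` on compacta. -/
def SphNormalFamily (g : ℕ → ℂ → ℂ) : Prop :=
  ∀ s : ℕ → ℕ, ∃ t : ℕ → ℕ, StrictMono t ∧
    ((∃ h : ℂ → ℂ, ∀ K ⊆ unitDisk, IsCompact K → ∀ ε > 0,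
        ∀ᶠ j in Filter.atTop, ∀ x ∈ K, chordal (g (s (t j)) x) (h x) < ε) ∨
      (∀ K ⊆ unitDisk, IsCompact K → ∀ C : ℝ,
        ∀ᶠ j in Filter.atTop, ∀ x ∈ K, C ≤ ‖g (s (t j)) x‖))


/-! ### Auxiliary lemmas -/

lemma unitDisk_isOpen : IsOpen unitDisk := Metric.isOpen_ball

lemma mem_unitDisk {z : ℂ} : z ∈ unitDisk ↔ ‖z‖ < 1 := mem_ball_zero_iff

lemma kobayashi_nonneg (M : Set E) (z ξ : E) : 0 ≤ kobayashi M z ξ := by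
  apply Real.sInf_nonneg
  rintro r ⟨φ, a, -, -, -, ha, rfl⟩
  positivity

lemma kobayashi_le {M : Set E} {z ξ : E} {φ : ℂ → E} {a : ℂ}
    (h1 : AnalyticDiskIn M φ) (h2 : φ 0 = z) (h3 : deriv φ 0 = a • ξ) (h4 : a ≠ 0) :
    kobayashi M z ξ ≤ 1 / ‖a‖ := by
  apply csInf_le
  · refine ⟨0, ?_⟩
    rintro r ⟨ψ, b, -, -, -, hb, rfl⟩
    positivity
  · exact ⟨φ, a, h1, h2, h3, h4, rfl⟩

lemma fderiv_exp_mul {f : E → ℂ} {z : E} (hfz : DifferentiableAt ℂ f z) (lam : ℂ) (ξ : E) :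
    fderiv ℂ (fun w => Complex.exp (lam * f w)) z ξ
      = Complex.exp (lam * f z) * (lam * fderiv ℂ f z ξ) := by
  have h1 : HasFDerivAt (fun w => lam * f w) (lam • fderiv ℂ f z) z :=
    hfz.hasFDerivAt.const_mul lam
  have h2 : HasFDerivAt (fun w => Complex.exp (lam * f w))
      (Complex.exp (lam * f z) • (lam • fderiv ℂ f z)) z :=
    (Complex.hasDerivAt_exp (lam * f z)).comp_hasFDerivAt z h1
  rw [h2.fderiv]
  simp [smul_eq_mul]

lemma hasDerivAt_comp_phi {f : E → ℂ} {φ : ℂ → E} {ζ : ℂ}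
    (hφ : HasDerivAt φ (deriv φ ζ) ζ) (hfz : DifferentiableAt ℂ f (φ ζ)) :
    HasDerivAt (f ∘ φ) (fderiv ℂ f (φ ζ) (deriv φ ζ)) ζ :=
  hfz.hasFDerivAt.comp_hasDerivAt ζ hφ

/-- Denominator of the disk automorphism is nonvanishing. -/
lemma mobius_den_ne {ζ w : ℂ} (hζ : ‖ζ‖ < 1) (hw : ‖w‖ < 1) :
    (1 : ℂ) + (starRingEnd ℂ) ζ * w ≠ 0 := by
  intro h
  have h1 : ‖(starRingEnd ℂ) ζ * w‖ < 1 := by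
    rw [norm_mul, RingHomIsometric.norm_map]
    nlinarith [norm_nonneg ζ, norm_nonneg w]
  have h2 : (starRingEnd ℂ) ζ * w = -1 := by linear_combination h
  rw [h2] at h1
  simp at h1

/-- The disk automorphism maps the unit disk into itself. -/
lemma mobius_maps {ζ w : ℂ} (hζ : ‖ζ‖ < 1) (hw : ‖w‖ < 1) :
    ‖(w + ζ) / (1 + (starRingEnd ℂ) ζ * w)‖ < 1 := by
  rw [norm_div, div_lt_one (by
    rw [norm_pos_iff]; exact mobius_den_ne hζ hw)]
  have hζ2 : Complex.normSq ζ < 1 := by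
    rw [← Complex.sq_norm]; nlinarith [norm_nonneg ζ]
  have hw2 : Complex.normSq w < 1 := by
    rw [← Complex.sq_norm]; nlinarith [norm_nonneg w]
  have key : Complex.normSq (w + ζ) < Complex.normSq (1 + (starRingEnd ℂ) ζ * w) := by
    simp only [Complex.normSq_apply, Complex.add_re, Complex.add_im, Complex.mul_re,
      Complex.mul_im, Complex.conj_re, Complex.conj_im, Complex.one_re, Complex.one_im,
      Complex.normSq_apply] at *
    nlinarith [mul_pos (sub_pos.2 hζ2) (sub_pos.2 hw2)]
  rw [Complex.norm_def, Complex.norm_def]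
  exact Real.sqrt_lt_sqrt (Complex.normSq_nonneg _) key

/-- The basic estimate: for a semi-Bloch `f` (with `λ = 1`) and any analytic disk `φ` in `M`,
the function `g = f ∘ φ` satisfies `|g'(ζ)| (1-|ζ|²) ≤ B cosh (Re g ζ)`. -/
lemma star_bound {M : Set E} (hM : IsOpen M) {f : E → ℂ} (hf : DifferentiableOn ℂ f M)
    {C₁ : ℝ}
    (hC₁ : ∀ z ∈ M, ∀ ξ : E, sphMetric (Complex.exp (1 * f z))
      (fderiv ℂ (fun z => Complex.exp (1 * f z)) z ξ) ≤ C₁ * kobayashi M z ξ)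
    {φ : ℂ → E} (hφ : AnalyticDiskIn M φ) {ζ : ℂ} (hζ : ζ ∈ unitDisk) :
    ‖deriv (f ∘ φ) ζ‖ * (1 - ‖ζ‖ ^ 2) ≤ (max C₁ 1) * Real.cosh ((f (φ ζ)).re) := by
  set B := max C₁ 1 with hB
  have hBpos : (0:ℝ) < B := lt_of_lt_of_le one_pos (le_max_right _ _)
  have hζ' : ‖ζ‖ < 1 := mem_unitDisk.1 hζ
  have hs : (0:ℝ) < 1 - ‖ζ‖ ^ 2 := by nlinarith [norm_nonneg ζ]
  set z' := φ ζ with hz'def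
  have hz' : z' ∈ M := hφ.2 hζ
  have hφζ : HasDerivAt φ (deriv φ ζ) ζ :=
    ((hφ.1 ζ hζ).differentiableAt (unitDisk_isOpen.mem_nhds hζ)).hasDerivAt
  have hfz' : DifferentiableAt ℂ f z' := (hf z' hz').differentiableAt (hM.mem_nhds hz')
  have hg : HasDerivAt (f ∘ φ) (fderiv ℂ f z' (deriv φ ζ)) ζ := hasDerivAt_comp_phi hφζ hfz'
  -- the Möbius automorphism m with m 0 = ζ
  set m : ℂ → ℂ := fun w => (w + ζ) / (1 + (starRingEnd ℂ) ζ * w) with hm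
  have hmmaps : Set.MapsTo m unitDisk unitDisk := by
    intro w hw
    exact mem_unitDisk.2 (mobius_maps hζ' (mem_unitDisk.1 hw))
  have hmdiff : DifferentiableOn ℂ m unitDisk := by
    apply DifferentiableOn.div
    · exact (differentiable_id.add_const ζ).differentiableOn
    · exact ((differentiable_id.const_mul _).const_add 1).differentiableOn
    · intro w hw; exact mobius_den_ne hζ' (mem_unitDisk.1 hw)
  have hm0 : m 0 = ζ := by simp [hm]
  have hmd : HasDerivAt m (((1 - ‖ζ‖ ^ 2 : ℝ) : ℂ)) 0 := by
    have hden0 : (1 : ℂ) + (starRingEnd ℂ) ζ * 0 ≠ 0 := by simp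
    have h := ((hasDerivAt_id (0:ℂ)).add_const ζ).div
      (((hasDerivAt_id (0:ℂ)).const_mul ((starRingEnd ℂ) ζ)).const_add 1) hden0
    refine HasDerivAt.congr_deriv (f := m) h ?_
    have : ζ * (starRingEnd ℂ) ζ = ((‖ζ‖ ^ 2 : ℝ) : ℂ) := by
      rw [Complex.mul_conj, Complex.normSq_eq_norm_sq]
    simp [this]
  have ha : (((1 - ‖ζ‖ ^ 2 : ℝ) : ℂ)) ≠ 0 := by
    simp only [ne_eq, Complex.ofReal_eq_zero]
    linarith
  have hψ : HasDerivAt (φ ∘ m) ((((1 - ‖ζ‖ ^ 2 : ℝ) : ℂ)) • deriv φ ζ) 0 := by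
    have := HasDerivAt.scomp (𝕜 := ℂ) 0 (by rw [hm0] at *; exact hφζ) hmd
    exact this
  have hk_le : kobayashi M z' (deriv φ ζ) ≤ 1 / (1 - ‖ζ‖ ^ 2) := by
    have h := kobayashi_le (M := M) (z := z') (ξ := deriv φ ζ)
      (φ := φ ∘ m) (a := ((1 - ‖ζ‖ ^ 2 : ℝ) : ℂ))
      ⟨(hφ.1).comp hmdiff hmmaps, (hφ.2).comp hmmaps⟩
      (by simp [Function.comp, hm0, hz'def])
      (by rw [hψ.deriv]) ha
    rwa [Complex.norm_real, Real.norm_eq_abs, abs_of_pos hs] at h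
  -- apply the normality hypothesis
  have hineq := hC₁ z' hz' (deriv φ ζ)
  rw [fderiv_exp_mul hfz' 1 (deriv φ ζ)] at hineq
  have hDval : fderiv ℂ f z' (deriv φ ζ) = deriv (f ∘ φ) ζ := (hg.deriv).symm
  set D := deriv (f ∘ φ) ζ with hD
  rw [hDval] at hineq
  set u := (f z').re with hu
  have hnorm1 : ‖Complex.exp (1 * f z')‖ = Real.exp u := by
    rw [Complex.norm_exp]; simp [hu]
  have hnorm2 : ‖Complex.exp (1 * f z') * (1 * D)‖ = Real.exp u * ‖D‖ := by
    rw [norm_mul, hnorm1, one_mul]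
  rw [sphMetric, hnorm1, hnorm2] at hineq
  -- chain the kobayashi bound
  have hknonneg := kobayashi_nonneg M z' (deriv φ ζ)
  have hchain : 2 * (Real.exp u * ‖D‖) / (1 + Real.exp u ^ 2) ≤ B * (1 / (1 - ‖ζ‖ ^ 2)) := by
    calc 2 * (Real.exp u * ‖D‖) / (1 + Real.exp u ^ 2)
        ≤ C₁ * kobayashi M z' (deriv φ ζ) := hineq
      _ ≤ B * kobayashi M z' (deriv φ ζ) :=
          mul_le_mul_of_nonneg_right (le_max_left _ _) hknonneg
      _ ≤ B * (1 / (1 - ‖ζ‖ ^ 2)) := mul_le_mul_of_nonneg_left hk_le hBpos.le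
  -- algebra: conclude the cosh bound
  have hexp : (0:ℝ) < Real.exp u := Real.exp_pos u
  have hchain2 : 2 * (Real.exp u * ‖D‖) * (1 - ‖ζ‖ ^ 2) ≤ B * (1 + Real.exp u ^ 2) := by
    have h := mul_le_mul_of_nonneg_right hchain hs.le
    have heq : B * (1 / (1 - ‖ζ‖ ^ 2)) * (1 - ‖ζ‖ ^ 2) = B := by
      rw [mul_one_div, div_mul_cancel₀ _ (ne_of_gt hs)]
    rw [heq] at h
    rw [div_mul_eq_mul_div, div_le_iff₀ (by positivity : (0:ℝ) < 1 + Real.exp u ^ 2)] at h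
    nlinarith [h]
  rw [Real.cosh_eq, Real.exp_neg]
  have hgoal : ‖D‖ * (1 - ‖ζ‖ ^ 2) * (2 * Real.exp u) ≤
      B * ((Real.exp u + (Real.exp u)⁻¹) / 2) * (2 * Real.exp u) := by
    have hinv : Real.exp u * (Real.exp u)⁻¹ = 1 := mul_inv_cancel₀ (ne_of_gt hexp)
    have hexpand : B * ((Real.exp u + (Real.exp u)⁻¹) / 2) * (2 * Real.exp u)
        = B * (Real.exp u ^ 2 + 1) := by
      field_simp
    rw [hexpand]
    nlinarith [hchain2]
  have h2e : (0:ℝ) < 2 * Real.exp u := by positivity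
  exact le_of_mul_le_mul_right hgoal h2e

/-- Key lemma (nonnegative real part version): a holomorphic function on the disk whose
exponential is "normal with constant B" has derivative at `0` bounded by `5B(1+Re g 0)`. -/
lemma keyA_nonneg {g : ℂ → ℂ} {B : ℝ} (hB : 1 ≤ B) (hg : DifferentiableOn ℂ g unitDisk)
    (hstar : ∀ ζ ∈ unitDisk, ‖deriv g ζ‖ * (1 - ‖ζ‖ ^ 2) ≤ B * Real.cosh ((g ζ).re))
    (h0re : 0 ≤ (g 0).re) :
    ‖deriv g 0‖ ≤ 5 * B * (1 + (g 0).re) := by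
  have hBpos : (0:ℝ) < B := lt_of_lt_of_le one_pos hB
  have h0mem : (0:ℂ) ∈ unitDisk := by simp [mem_unitDisk]
  rcases le_or_gt ((g 0).re) 2 with hc | hc
  · -- small real part: direct bound
    have h := hstar 0 h0mem
    simp only [norm_zero] at h
    have hcosh : Real.cosh ((g 0).re) ≤ 5 := by
      rw [Real.cosh_eq]
      have h1 : Real.exp ((g 0).re) ≤ Real.exp 2 := Real.exp_le_exp.2 hc
      have h2 : Real.exp (-(g 0).re) ≤ 1 := Real.exp_le_one_iff.2 (by linarith)
      have h3 : Real.exp 2 = Real.exp 1 * Real.exp 1 := by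
        rw [← Real.exp_add]; norm_num
      have h4 := Real.exp_one_lt_d9
      nlinarith [Real.exp_pos 1]
    nlinarith [h, norm_nonneg (deriv g 0)]
  · -- large real part
    set u0 := (g 0).re with hu0
    set δ : ℝ := 1 / (2 * B) with hδ
    have hδpos : 0 < δ := by positivity
    have hδle : δ ≤ 1 / 2 := by
      rw [hδ, div_le_div_iff₀ (by positivity) (by norm_num)]
      nlinarith
    have hsub : Metric.ball (0:ℂ) δ ⊆ unitDisk := by
      apply Metric.ball_subset_ball; linarith
    have hgdiff : ∀ w ∈ Metric.ball (0:ℂ) δ, HasDerivAt g (deriv g w) w := fun w hw =>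
      ((hg w (hsub hw)).differentiableAt (unitDisk_isOpen.mem_nhds (hsub hw))).hasDerivAt
    -- Step 1: the real part of g stays positive on ball(0, δ)
    have hpos : ∀ w ∈ Metric.ball (0:ℂ) δ, 0 < (g w).re := by
      intro ζ₁ hζ₁mem
      by_contra hle
      push_neg at hle
      have hζ₁ : ‖ζ₁‖ < δ := mem_ball_zero_iff.1 hζ₁mem
      set c : ℝ → ℂ := fun t => (t : ℂ) * ζ₁ with hcdef
      have hcmem : ∀ t ∈ Icc (0:ℝ) 1, c t ∈ Metric.ball (0:ℂ) δ := by
        intro t ht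
        rw [mem_ball_zero_iff]
        have : ‖c t‖ = |t| * ‖ζ₁‖ := by rw [hcdef]; simp [Complex.norm_real]
        rw [this]
        rcases ht with ⟨ht0, ht1⟩
        have habs : |t| ≤ 1 := abs_le.2 ⟨by linarith, ht1⟩
        nlinarith [norm_nonneg ζ₁, abs_nonneg t]
      set h : ℝ → ℝ := fun t => Real.arctan (Real.sinh ((g (c t)).re)) with hhdef
      have hderivh : ∀ t ∈ Icc (0:ℝ) 1, HasDerivAt h
          (1 / (1 + Real.sinh ((g (c t)).re) ^ 2) *
            (Real.cosh ((g (c t)).re) * (deriv g (c t) * ζ₁).re)) t := by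
        intro t ht
        have h1 : HasDerivAt (fun w : ℂ => g (w * ζ₁)) (deriv g (c t) * ζ₁) ((t : ℝ) : ℂ) := by
          have hid : HasDerivAt (fun w : ℂ => w * ζ₁) ζ₁ ((t : ℝ) : ℂ) := by
            simpa using (hasDerivAt_id ((t : ℝ) : ℂ)).mul_const ζ₁
          have := (hgdiff (c t) (hcmem t ht)).comp ((t : ℝ) : ℂ) hid
          exact this
        have h2 : HasDerivAt (fun s : ℝ => (g ((s : ℂ) * ζ₁)).re)
            ((deriv g (c t) * ζ₁).re) t := h1.real_of_complex
        have h3 := h2.sinh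
        have h4 := h3.arctan
        simpa [hhdef, hcdef, mul_comm, mul_assoc, mul_left_comm] using h4
      have hbound : ∀ t ∈ Icc (0:ℝ) 1, ‖(1 / (1 + Real.sinh ((g (c t)).re) ^ 2) *
            (Real.cosh ((g (c t)).re) * (deriv g (c t) * ζ₁).re))‖ ≤ 2 / 3 := by
        intro t ht
        set v := (g (c t)).re with hv
        have hcosh1 : 1 ≤ Real.cosh v := Real.one_le_cosh v
        have hcoshpos : 0 < Real.cosh v := by linarith
        have hsq : 1 + Real.sinh v ^ 2 = Real.cosh v ^ 2 := by
          rw [Real.cosh_sq]; ring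
        have hct : ‖c t‖ < δ := mem_ball_zero_iff.1 (hcmem t ht)
        have h34 : (3:ℝ) / 4 ≤ 1 - ‖c t‖ ^ 2 := by nlinarith [norm_nonneg (c t)]
        have hg' := hstar (c t) (hsub (hcmem t ht))
        have hgd : ‖deriv g (c t)‖ ≤ B * Real.cosh v * (4 / 3) := by
          nlinarith [norm_nonneg (deriv g (c t))]
        have hre : |(deriv g (c t) * ζ₁).re| ≤ ‖deriv g (c t)‖ * ‖ζ₁‖ := by
          calc |(deriv g (c t) * ζ₁).re| ≤ ‖deriv g (c t) * ζ₁‖ :=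
                Complex.abs_re_le_norm _
            _ = ‖deriv g (c t)‖ * ‖ζ₁‖ := by
                rw [norm_mul]
        rw [Real.norm_eq_abs, hsq, abs_mul, abs_mul]
        have habs1 : |1 / Real.cosh v ^ 2| = 1 / Real.cosh v ^ 2 := by
          rw [abs_of_pos]; positivity
        have habs2 : |Real.cosh v| = Real.cosh v := abs_of_pos hcoshpos
        rw [habs1, habs2]
        have hζδ : ‖ζ₁‖ ≤ δ := hζ₁.le
        have hfinal : |(deriv g (c t) * ζ₁).re| ≤ B * Real.cosh v * (4 / 3) * δ := by
          calc |(deriv g (c t) * ζ₁).re| ≤ ‖deriv g (c t)‖ * ‖ζ₁‖ := hre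
            _ ≤ (B * Real.cosh v * (4 / 3)) * δ := by
                apply mul_le_mul hgd hζδ (norm_nonneg _)
                positivity
        have hBδ : B * δ = 1 / 2 := by
          rw [hδ]; field_simp
        calc 1 / Real.cosh v ^ 2 * (Real.cosh v * |(deriv g (c t) * ζ₁).re|)
            ≤ 1 / Real.cosh v ^ 2 * (Real.cosh v * (B * Real.cosh v * (4 / 3) * δ)) := by
              apply mul_le_mul_of_nonneg_left _ (by positivity)
              exact mul_le_mul_of_nonneg_left hfinal hcoshpos.le
          _ = (B * δ) * (4 / 3) := by field_simp
          _ = 2 / 3 := by rw [hBδ]; norm_num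
      have hmvt := Convex.norm_image_sub_le_of_norm_hasDerivWithin_le
        (fun t ht => (hderivh t ht).hasDerivWithinAt)
        hbound (convex_Icc 0 1) (left_mem_Icc.2 (by norm_num)) (right_mem_Icc.2 (by norm_num))
      have hc0 : c 0 = 0 := by simp [hcdef]
      have hc1 : c 1 = ζ₁ := by simp [hcdef]
      have hh0 : Real.pi / 4 ≤ h 0 := by
        rw [hhdef]
        simp only [hc0]
        rw [← Real.arctan_one]
        apply Real.arctan_strictMono.monotone
        have hsinh2 : (1:ℝ) ≤ Real.sinh 2 := by
          rw [Real.sinh_eq]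
          have h1 : (3:ℝ) ≤ Real.exp 2 := by nlinarith [Real.add_one_le_exp (2:ℝ)]
          have h2 : Real.exp (-2 : ℝ) ≤ 1 := Real.exp_le_one_iff.2 (by norm_num)
          nlinarith
        have : Real.sinh 2 ≤ Real.sinh u0 := Real.sinh_le_sinh.2 hc.le
        linarith
      have hh1 : h 1 ≤ 0 := by
        rw [hhdef]
        simp only [hc1]
        rw [← Real.arctan_zero]
        apply Real.arctan_strictMono.monotone
        exact Real.sinh_nonpos_iff.2 hle
      have habs : |h 1 - h 0| ≤ 2 / 3 := by
        have := hmvt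
        rw [Real.norm_eq_abs] at this
        simpa using this
      have hpi := Real.pi_gt_three
      rw [abs_le] at habs
      linarith [habs.1]
    -- Step 2: Schwarz–Pick for the half-plane
    set w0 := g 0 with hw0def
    have h0ball : (0:ℂ) ∈ Metric.ball (0:ℂ) δ := by
      rw [mem_ball_zero_iff]; simpa using hδpos
    have hu0pos : 0 < w0.re := by
      rw [hw0def]; linarith
    set F : ℂ → ℂ := fun w => (g w - w0) / (g w + (starRingEnd ℂ) w0) with hFdef
    have hden : ∀ w ∈ Metric.ball (0:ℂ) δ, g w + (starRingEnd ℂ) w0 ≠ 0 := by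
      intro w hw hzero
      have h1 : (g w + (starRingEnd ℂ) w0).re = 0 := by rw [hzero]; simp
      rw [Complex.add_re, Complex.conj_re] at h1
      have h2 := hpos w hw
      linarith
    have hFdiff : DifferentiableOn ℂ F (Metric.ball (0:ℂ) δ) := by
      apply DifferentiableOn.div
      · exact (hg.mono hsub).sub_const w0
      · exact (hg.mono hsub).add_const ((starRingEnd ℂ) w0)
      · exact hden
    have hF0 : F 0 = 0 := by simp [hFdef, hw0def]
    have hFmaps : Set.MapsTo F (Metric.ball (0:ℂ) δ) (Metric.ball (F 0) 1) := by
      intro w hw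
      rw [hF0, mem_ball_zero_iff]
      have hgw := hpos w hw
      rw [hFdef]
      simp only [norm_div]
      rw [div_lt_one (norm_pos_iff.2 (hden w hw))]
      have key : Complex.normSq (g w - w0) < Complex.normSq (g w + (starRingEnd ℂ) w0) := by
        simp only [Complex.normSq_apply, Complex.sub_re, Complex.sub_im, Complex.add_re,
          Complex.add_im, Complex.conj_re, Complex.conj_im]
        nlinarith [mul_pos hgw hu0pos]
      rw [Complex.norm_def, Complex.norm_def]
      exact Real.sqrt_lt_sqrt (Complex.normSq_nonneg _) key
    have hschwarz := Complex.norm_deriv_le_div_of_mapsTo_ball hFdiff (hFmaps.mono_right Metric.ball_subset_closedBall) hδpos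
    have hg0 : HasDerivAt g (deriv g 0) 0 := hgdiff 0 h0ball
    have hFD : HasDerivAt F
        ((deriv g 0 * (g 0 + (starRingEnd ℂ) w0) - (g 0 - w0) * deriv g 0) /
          (g 0 + (starRingEnd ℂ) w0) ^ 2) 0 :=
      (hg0.sub_const w0).div (hg0.add_const ((starRingEnd ℂ) w0)) (hden 0 h0ball)
    have hderivF : ‖deriv F 0‖ = ‖deriv g 0‖ / (2 * w0.re) := by
      rw [hFD.deriv]
      have hgw0 : g 0 - w0 = 0 := by rw [hw0def]; ring
      have hsum : g 0 + (starRingEnd ℂ) w0 = ((2 * w0.re : ℝ) : ℂ) := by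
        rw [hw0def]; exact Complex.add_conj _
      rw [hgw0, hsum]
      rw [zero_mul, sub_zero, norm_div, norm_mul, norm_pow, Complex.norm_real, Real.norm_eq_abs,
        abs_of_pos (by linarith : (0:ℝ) < 2 * w0.re)]
      rw [sq]
      field_simp
    rw [hderivF] at hschwarz
    have h1δ : 1 / δ = 2 * B := by
      rw [hδ]; field_simp
    rw [h1δ] at hschwarz
    have habsval : ‖deriv g 0‖ = ‖deriv g 0‖ := rfl
    rw [div_le_iff₀ (by linarith : (0:ℝ) < 2 * w0.re)] at hschwarz
    rw [habsval]
    nlinarith [hschwarz, hu0pos, hBpos, norm_nonneg (deriv g 0)]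

/-- Key lemma: derivative bound for functions whose exponential is normal with constant `B`. -/
lemma keyA {g : ℂ → ℂ} {B : ℝ} (hB : 1 ≤ B) (hg : DifferentiableOn ℂ g unitDisk)
    (hstar : ∀ ζ ∈ unitDisk, ‖deriv g ζ‖ * (1 - ‖ζ‖ ^ 2) ≤ B * Real.cosh ((g ζ).re)) :
    ‖deriv g 0‖ ≤ 5 * B * (1 + |(g 0).re|) := by
  rcases le_or_gt 0 ((g 0).re) with h0 | h0
  · rw [abs_of_nonneg h0]
    exact keyA_nonneg hB hg hstar h0
  · have hgneg : DifferentiableOn ℂ (fun ζ => -(g ζ)) unitDisk := hg.neg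
    have hstarneg : ∀ ζ ∈ unitDisk, ‖deriv (fun ζ => -(g ζ)) ζ‖ * (1 - ‖ζ‖ ^ 2)
        ≤ B * Real.cosh (((fun ζ => -(g ζ)) ζ).re) := by
      intro ζ hζ
      have hd : deriv (fun ζ => -(g ζ)) ζ = -(deriv g ζ) := deriv.neg
      rw [hd, norm_neg]
      simp only [Complex.neg_re, Real.cosh_neg]
      exact hstar ζ hζ
    have h := keyA_nonneg hB hgneg hstarneg (by simp [Complex.neg_re]; linarith)
    have hd : deriv (fun ζ => -(g ζ)) 0 = -(deriv g 0) := deriv.neg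
    rw [hd, norm_neg] at h
    simp only [Complex.neg_re] at h
    rw [abs_of_neg h0]
    linarith

/-- On an infinitesimally Kobayashi non-degenerate manifold,
`𝓑(M) ⊆ 𝓢𝓑(M) ⊆ 𝓝(M)`. -/
theorem bloch_subset_semiBloch_subset_normal (M : Set E) (hM : IsOpen M)
    (hk : KobayashiNondegenerate M) (f : E → ℂ) (hf : DifferentiableOn ℂ f M) :
    (BlochOn M f → SemiBloch M f) ∧ (SemiBloch M f → NormalOn M f) := by
  constructor
  · -- Bloch ⊆ semi-Bloch
    rintro ⟨C, hC⟩ lam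
    refine ⟨‖lam‖ * C, fun z hz ξ => ?_⟩
    have hfz : DifferentiableAt ℂ f z := (hf z hz).differentiableAt (hM.mem_nhds hz)
    rw [fderiv_exp_mul hfz lam ξ]
    set D := fderiv ℂ f z ξ with hD
    have hE : ‖Complex.exp (lam * f z)‖ = Real.exp ((lam * f z).re) := by
      rw [Complex.norm_exp]
    rw [sphMetric, norm_mul, norm_mul, hE]
    set e := Real.exp ((lam * f z).re) with he
    have hepos : (0:ℝ) < e := Real.exp_pos _
    have hstep1 : 2 * (e * (‖lam‖ * ‖D‖)) / (1 + e ^ 2) ≤ ‖lam‖ * ‖D‖ := by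
      rw [div_le_iff₀ (by positivity)]
      nlinarith [mul_nonneg (norm_nonneg lam) (norm_nonneg D), sq_nonneg (e - 1)]
    have hstep2 : ‖lam‖ * ‖D‖ ≤ ‖lam‖ * (C * kobayashi M z ξ) :=
      mul_le_mul_of_nonneg_left (hC z hz ξ) (norm_nonneg lam)
    calc 2 * (e * (‖lam‖ * ‖D‖)) / (1 + e ^ 2)
        ≤ ‖lam‖ * ‖D‖ := hstep1
      _ ≤ ‖lam‖ * (C * kobayashi M z ξ) := hstep2
      _ = ‖lam‖ * C * kobayashi M z ξ := by ring
  · -- semi-Bloch ⊆ normal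
    intro hsb
    obtain ⟨C₁, hC₁⟩ := hsb 1
    set B := max C₁ 1 with hB
    have hB1 : (1:ℝ) ≤ B := le_max_right _ _
    have hBpos : (0:ℝ) < B := lt_of_lt_of_le one_pos hB1
    refine ⟨20 * B, fun z hz ξ => ?_⟩
    have hfz : DifferentiableAt ℂ f z := (hf z hz).differentiableAt (hM.mem_nhds hz)
    set D := fderiv ℂ f z ξ with hD
    -- the set over which the infimum is taken
    set S := { r : ℝ | ∃ (φ : ℂ → E) (a : ℂ), AnalyticDiskIn M φ ∧ φ 0 = z ∧
      deriv φ 0 = a • ξ ∧ a ≠ 0 ∧ r = 1 / ‖a‖ } with hS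
    -- S is nonempty
    have hne : S.Nonempty := by
      obtain ⟨ρ, hρpos, hρ⟩ := Metric.isOpen_iff.1 hM z hz
      set ε : ℝ := ρ / (‖ξ‖ + 1) with hε
      have hεpos : 0 < ε := by positivity
      set φ₀ : ℂ → E := fun w => z + ((ε : ℂ) * w) • ξ with hφ₀
      have hεξ : ε * ‖ξ‖ < ρ := by
        rw [hε, div_mul_eq_mul_div, div_lt_iff₀ (by positivity)]
        nlinarith [norm_nonneg ξ]
      have hd0 : HasDerivAt φ₀ ((ε : ℂ) • ξ) 0 := by
        have h1 : HasDerivAt (fun w : ℂ => (ε : ℂ) * w) (ε : ℂ) 0 := by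
          simpa using (hasDerivAt_id (0:ℂ)).const_mul (ε : ℂ)
        have h2 : HasDerivAt (fun w : ℂ => ((ε : ℂ) * w) • ξ) ((ε : ℂ) • ξ) 0 :=
          h1.smul_const ξ
        simpa [hφ₀] using h2.const_add z
      refine ⟨1 / ‖(ε : ℂ)‖, φ₀, (ε : ℂ), ⟨?_, ?_⟩, by simp [hφ₀], ?_, ?_, rfl⟩
      · apply Differentiable.differentiableOn
        exact (differentiable_const z).add ((differentiable_id.const_mul _).smul_const ξ)
      · intro w hw
        apply hρ
        rw [Metric.mem_ball, dist_eq_norm]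
        have : φ₀ w - z = ((ε : ℂ) * w) • ξ := by rw [hφ₀]; ring_nf; abel
        rw [this, norm_smul, norm_mul, Complex.norm_real, Real.norm_eq_abs,
          abs_of_pos hεpos]
        have hw1 : ‖w‖ < 1 := mem_unitDisk.1 hw
        nlinarith [norm_nonneg ξ, norm_nonneg w, mul_nonneg (norm_nonneg w) (norm_nonneg ξ)]
      · exact hd0.deriv
      · simpa using ne_of_gt hεpos
    -- the main estimate : sph ≤ 20 B r for every r ∈ S
    have hmain : ∀ r ∈ S, sphMetric (f z) (D) ≤ 20 * B * r := by
      rintro r ⟨φ, a, hφdisk, hφ0, hφder, ha, rfl⟩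
      set g := f ∘ φ with hg
      have hgdiff : DifferentiableOn ℂ g unitDisk :=
        hf.comp hφdisk.1 hφdisk.2
      have hstar : ∀ ζ ∈ unitDisk, ‖deriv g ζ‖ * (1 - ‖ζ‖ ^ 2)
          ≤ B * Real.cosh ((g ζ).re) := by
        intro ζ hζ
        exact star_bound hM hf hC₁ hφdisk hζ
      have hkey := keyA hB1 hgdiff hstar
      -- compute deriv g 0
      have h0mem : (0:ℂ) ∈ unitDisk := by simp [mem_unitDisk]
      have hφd0 : HasDerivAt φ (deriv φ 0) 0 :=
        ((hφdisk.1 0 h0mem).differentiableAt (unitDisk_isOpen.mem_nhds h0mem)).hasDerivAt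
      have hfφ0 : DifferentiableAt ℂ f (φ 0) := by rw [hφ0]; exact hfz
      have hgder : deriv g 0 = a • D := by
        have h1 := (hasDerivAt_comp_phi hφd0 hfφ0).deriv
        rw [h1, hφder]
        have : fderiv ℂ f (φ 0) (a • ξ) = a • fderiv ℂ f (φ 0) ξ :=
          (fderiv ℂ f (φ 0)).map_smul a ξ
        rw [this, hφ0, hD]
      have hg0 : g 0 = f z := by rw [hg]; simp [Function.comp, hφ0]
      rw [hgder, hg0] at hkey
      rw [norm_smul] at hkey
      -- hkey : ‖a‖ * ‖D‖ ≤ 5 * B * (1 + |(f z).re|)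
      have hrebound : |(f z).re| ≤ ‖f z‖ := by
        exact Complex.abs_re_le_norm _
      have hkey2 : ‖a‖ * ‖D‖ ≤ 5 * B * (1 + ‖f z‖) := by
        calc ‖a‖ * ‖D‖ ≤ 5 * B * (1 + |(f z).re|) := hkey
          _ ≤ 5 * B * (1 + ‖f z‖) := by nlinarith
      have htnn : 0 ≤ ‖f z‖ := norm_nonneg _
      have hapos : (0:ℝ) < ‖a‖ := norm_pos_iff.2 ha
      have hsph : sphMetric (f z) D = 2 * ‖D‖ / (1 + ‖f z‖ ^ 2) := rfl
      rw [hsph, mul_one_div, div_le_div_iff₀ (by positivity : (0:ℝ) < 1 + ‖f z‖ ^ 2) hapos]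
      -- goal: 2 * ‖D‖ * ‖a‖ ≤ 20 * B * (1 + ‖f z‖ ^ 2)
      nlinarith [hkey2, mul_nonneg hBpos.le (sq_nonneg (2 * ‖f z‖ - 1)),
        mul_nonneg hBpos.le htnn]
    -- conclude via the infimum
    have hinf : sphMetric (f z) D / (20 * B) ≤ kobayashi M z ξ := by
      apply le_csInf hne
      intro r hr
      rw [div_le_iff₀ (by positivity)]
      calc sphMetric (f z) D ≤ 20 * B * r := hmain r hr
        _ = r * (20 * B) := by ring
    rw [div_le_iff₀ (by positivity)] at hinf
    calc sphMetric (f z) D ≤ kobayashi M z ξ * (20 * B) := hinf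
      _ = 20 * B * kobayashi M z ξ := by ring

end
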